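/- Synthesis identity in d dimensions. Fix k ∈ {1,…,min_i n_i − 1}. For every (j₁,…,j_d) with j_i ∈ {k+1,…,n_i} for all i, one has D^k φ̃^k_{j₁,…,j_d} = 1_{{j₁}} × ⋯ × 1_{{j_d}} (the tensor in ℝ^{(n₁−k)×⋯×(n_d−k)} equal to 1 at index (j₁,…,j_d) and 0 elsewhere), and D^k φ̃^k_{j₁,…,j_d} = 0 whenever j_i ≤ k for some i. Consequently, if f = ∑_{j₁=k+1}^{n₁}⋯∑_{j_d=k+1}^{n_d} β_{j₁,…,j_d} φ̃^k_{j₁,…,j_d} for coefficients β ∈ ℝ^{(n₁−k)×⋯×(n_d−k)}, then D^k f = β. -/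

import Mathlib

open Finset

noncomputable section

namespace VitaliTV

variable {ι : Type*} [Fintype ι] [DecidableEq ι]

abbrev Idx (nn : ι → ℕ) := ∀ i, Fin (nn i)
abbrev Tensor (nn : ι → ℕ) := EuclideanSpace ℝ (Idx nn)
abbrev DIdx (nn : ι → ℕ) (k : ℕ) := ∀ i, Fin (nn i - k)

/-- The total `k`-th order difference operator `D^k = ∏ i, D_i^k`, including the
normalization `∏ i, nn i ^ (k-1) = n^(k-1)`.  The output entry at `j : DIdx nn k`
corresponds to the 1-based multi-index `(j i + k + 1)_i ∈ ∏ i, {k+1, …, nn i}`. -/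
def Dop (nn : ι → ℕ) (k : ℕ) (f : Tensor nn) : DIdx nn k → ℝ :=
  fun j => (∏ i, (nn i : ℝ) ^ (k - 1)) *
    ∑ l : ι → Fin (k + 1),
      (∏ i, ((-1 : ℝ) ^ (l i : ℕ) * (Nat.choose k (l i) : ℝ))) *
      f (fun i => ⟨(j i : ℕ) + k - (l i : ℕ), by have := (j i).isLt; omega⟩)

def phiHigh (n : ℕ) : ℕ → ℕ → Fin n → ℝ
  | 0, _ => fun _ => 0
  | 1, j => fun j' => if j ≤ (j' : ℕ) + 1 then 1 else 0
  | (k + 2), j => fun j' => (1 / (n : ℝ)) * ∑ l ∈ Finset.Icc j n, phiHigh n (k + 1) l j'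

/-- The original one-dimensional dictionary (1-based indices). -/
def phi (n k j : ℕ) : EuclideanSpace ℝ (Fin n) :=
  if j ≤ k - 1 then WithLp.toLp 2 (phiHigh n j j) else WithLp.toLp 2 (phiHigh n k j)

/-- Antiprojection operator: `AW W v` is the orthogonal projection of `v` onto `Wᗮ`. -/
def AW {E : Type*} [NormedAddCommGroup E] [InnerProductSpace ℝ E] [FiniteDimensional ℝ E]
    (W : Submodule ℝ E) (v : E) : E :=
  (Wᗮ.orthogonalProjection v : E)

def Vspan (n m : ℕ) : Submodule ℝ (EuclideanSpace ℝ (Fin n)) :=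
  Submodule.span ℝ {v | ∃ l ∈ Finset.Icc 1 m, v = phi n l l}

/-- The partially orthonormalized one-dimensional dictionary `φ̃^k_j`. -/
def phiTil (n k j : ℕ) : EuclideanSpace ℝ (Fin n) :=
  if j ≤ k then
    (Real.sqrt n / ‖AW (Vspan n (j - 1)) (phi n j j)‖) • AW (Vspan n (j - 1)) (phi n j j)
  else AW (Vspan n k) (phi n k j)

/-- The `d`-dimensional partially orthonormalized dictionary tensor
`φ̃^k_{j₁,…,j_d} = φ̃^k_{j₁} × ⋯ × φ̃^k_{j_d}` (the `j i` are 1-based). -/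
def phiTilD (nn : ι → ℕ) (k : ℕ) (j : ι → ℕ) : Tensor nn :=
  WithLp.toLp 2 (fun x => ∏ i, phiTil (nn i) k (j i) (x i))


lemma hockey (k j X : ℕ) (h : j ≤ X + 1) :
    ∑ l ∈ Finset.Icc j (X+1), ((X+k+1-l).choose k) = (X+k+2-j).choose (k+1) := by
  have : ∑ l ∈ Finset.Icc j (X+1), ((X+k+1-l).choose k)
      = ∑ m ∈ Finset.Icc k (X+k+1-j), m.choose k := by
    apply Finset.sum_nbij' (fun l => X+k+1-l) (fun m => X+k+1-m)
    all_goals (intro a ha; simp only [Finset.mem_Icc] at *; try (first | rfl | omega))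
  rw [this, Nat.sum_Icc_choose]
  congr 1
  omega


/-- k-th backward difference of `x ↦ C(x, r)` vanishes when `r < k`. -/
lemma alt_sum_choose_eq_zero : ∀ (k r a : ℕ), r < k → k ≤ a →
    ∑ l ∈ Finset.range (k + 1), (-1 : ℝ) ^ l * (k.choose l) * ((a - l).choose r) = 0 := by
  intro k
  induction k with
  | zero => omega
  | succ k ih =>
    intro r a hr ha
    have key : ∑ l ∈ Finset.range (k + 2), (-1 : ℝ) ^ l * ((k+1).choose l) * ((a - l).choose r)
        = ∑ l ∈ Finset.range (k + 1),
            (-1 : ℝ) ^ l * (k.choose l) * (((a - l).choose r : ℝ) - ((a - l - 1).choose r : ℝ)) := by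
      rw [Finset.sum_range_succ' (fun l => (-1 : ℝ) ^ l * ((k+1).choose l) * ((a - l).choose r)) (k+1)]
      have hA : ∑ l ∈ Finset.range (k + 2), (-1 : ℝ) ^ l * (k.choose l) * ((a - l).choose r)
          = ∑ l ∈ Finset.range (k + 1), (-1 : ℝ) ^ l * (k.choose l) * ((a - l).choose r) := by
        rw [Finset.sum_range_succ]; simp
      rw [Finset.sum_range_succ' (fun l => (-1 : ℝ) ^ l * (k.choose l) * ((a - l).choose r)) (k+1)] at hA
      have hterm : ∀ l, (-1 : ℝ) ^ (l+1) * ((k+1).choose (l+1)) * ((a - (l+1)).choose r)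
          = -((-1 : ℝ) ^ l * (k.choose l) * ((a - l - 1).choose r))
            + (-1 : ℝ) ^ (l+1) * (k.choose (l+1)) * ((a - (l+1)).choose r) := by
        intro l
        have : a - (l+1) = a - l - 1 := by omega
        rw [Nat.choose_succ_succ, this]
        push_cast
        ring
      simp only [hterm]
      rw [Finset.sum_add_distrib]
      have := hA
      simp only [pow_zero, one_mul, Nat.sub_zero, Nat.choose_zero_right, Nat.cast_one, mul_one] at this ⊢
      simp only [mul_sub]
      rw [Finset.sum_sub_distrib, Finset.sum_neg_distrib]
      linarith [this]
    rw [key]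
    rcases Nat.eq_zero_or_pos r with rfl | hr0
    · simp
    · obtain ⟨r', rfl⟩ := Nat.exists_eq_add_of_le hr0
      have hpas : ∀ l ∈ Finset.range (k+1),
          (-1 : ℝ) ^ l * (k.choose l) * (((a - l).choose (1 + r') : ℝ) - ((a - l - 1).choose (1 + r') : ℝ))
          = (-1 : ℝ) ^ l * (k.choose l) * (((a - 1 - l).choose r' : ℝ)) := by
        intro l hl
        simp only [Finset.mem_range] at hl
        have h1 : a - l = (a - l - 1) + 1 := by omega
        have h2 : a - 1 - l = a - l - 1 := by omega
        rw [h1, h2, add_comm 1 r', Nat.choose_succ_succ]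
        push_cast
        ring
      rw [Finset.sum_congr rfl hpas]
      exact ih r' (a-1) (by omega) (by omega)

lemma phiHigh_closed (n : ℕ) : ∀ k, 1 ≤ k → ∀ j (x : Fin n),
    phiHigh n k j x = (1/(n:ℝ)^(k-1)) *
      (if j ≤ (x:ℕ)+1 then (((x:ℕ) + k - j).choose (k-1) : ℝ) else 0) := by
  intro k
  induction k with
  | zero => omega
  | succ k ih =>
    intro _ j x
    match k, ih with
    | 0, _ => show (if j ≤ (x:ℕ)+1 then (1:ℝ) else 0) = _; simp
    | k + 1, ih =>
      have hx : (x:ℕ) + 1 ≤ n := x.isLt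
      have ihstep : ∀ l ∈ Finset.Icc j n, phiHigh n (k+1) l x
          = (1/(n:ℝ)^k) * (if l ≤ (x:ℕ)+1 then (((x:ℕ) + (k+1) - l).choose k : ℝ) else 0) := by
        intro l _
        simpa using ih (by omega) l x
      show (1/(n:ℝ)) * ∑ l ∈ Finset.Icc j n, phiHigh n (k+1) l x = _
      rw [Finset.sum_congr rfl ihstep, ← Finset.mul_sum]
      have hfil : ∑ l ∈ Finset.Icc j n, (if l ≤ (x:ℕ)+1 then (((x:ℕ) + (k+1) - l).choose k : ℝ) else 0)
          = ∑ l ∈ Finset.Icc j ((x:ℕ)+1), (((x:ℕ) + (k+1) - l).choose k : ℝ) := by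
        rw [← Finset.sum_filter]
        congr 1
        ext a
        simp only [Finset.mem_Icc, Finset.mem_filter]
        omega
      rw [hfil]
      by_cases h : j ≤ (x:ℕ)+1
      · rw [if_pos h]
        have hc : ∑ l ∈ Finset.Icc j ((x:ℕ)+1), ((((x:ℕ) + (k+1) - l).choose k : ℝ))
            = (((x:ℕ)+k+2-j).choose (k+1) : ℝ) := by
          rw [← Nat.cast_sum, ← hockey k j (x:ℕ) h]
          norm_num [Nat.add_assoc]
        rw [hc]
        have hxx : (x:ℕ) + (k+2) - j = (x:ℕ)+k+2-j := by omega
        rw [hxx]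
        have : ((k+2) - 1) = k + 1 := by omega
        rw [this, pow_succ]
        ring
      · rw [if_neg h]
        have : Finset.Icc j ((x:ℕ)+1) = ∅ := by
          rw [Finset.Icc_eq_empty_iff]
          omega
        rw [this]
        simp

def D1L (n k : ℕ) (j : Fin (n - k)) : EuclideanSpace ℝ (Fin n) →ₗ[ℝ] ℝ where
  toFun g := ∑ l : Fin (k+1), (-1:ℝ)^(l:ℕ) * (k.choose (l:ℕ)) *
      g ⟨(j:ℕ)+k-(l:ℕ), by have := j.isLt; omega⟩
  map_add' g h := by
    simp only [PiLp.add_apply, mul_add]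
    rw [Finset.sum_add_distrib]
  map_smul' c g := by
    simp only [PiLp.smul_apply, smul_eq_mul, RingHom.id_apply, Finset.mul_sum]
    apply Finset.sum_congr rfl
    intros; ring

lemma D1L_phiHigh_main (n k : ℕ) (hk : 1 ≤ k) (j₀ : ℕ) (j : Fin (n-k)) :
    D1L n k j (WithLp.toLp 2 (phiHigh n k j₀)) = (1/(n:ℝ)^(k-1)) * (if (j:ℕ)+k+1 = j₀ then 1 else 0) := by
  have hjk : (j:ℕ) + k < n := by have := j.isLt; omega
  show (∑ l : Fin (k+1), (-1:ℝ)^(l:ℕ) * (k.choose (l:ℕ)) *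
      phiHigh n k j₀ ⟨(j:ℕ)+k-(l:ℕ), by omega⟩) = _
  have hterm : ∀ l : Fin (k+1),
      phiHigh n k j₀ ⟨(j:ℕ)+k-(l:ℕ), by omega⟩
      = (1/(n:ℝ)^(k-1)) * (if j₀ ≤ ((j:ℕ)+k-(l:ℕ))+1
          then ((((j:ℕ)+k-(l:ℕ)) + k - j₀).choose (k-1) : ℝ) else 0) := by
    intro l
    exact phiHigh_closed n k hk j₀ ⟨(j:ℕ)+k-(l:ℕ), by omega⟩
  simp only [hterm]
  rcases lt_trichotomy ((j:ℕ)+k+1) j₀ with hlt | heq | hgt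
  · -- j₀ > j+k+1 : everything vanishes
    rw [if_neg (by omega)]
    rw [Finset.sum_eq_zero, mul_zero]
    intro l _
    rw [if_neg (by omega), mul_zero, mul_zero]
  · -- j₀ = j+k+1 : only l = 0 survives
    rw [if_pos heq, mul_one]
    rw [Finset.sum_eq_single 0]
    · have h0 : ((j:ℕ)+k-((0 : Fin (k+1)):ℕ)) = (j:ℕ)+k := by simp
      rw [h0, if_pos (by omega)]
      have : ((j:ℕ)+k) + k - j₀ = k - 1 := by omega
      rw [this, Nat.choose_self]
      simp
    · intro l _ hl0
      have hl0' : 1 ≤ (l:ℕ) := by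
        rcases Nat.eq_zero_or_pos (l:ℕ) with h | h
        · exact absurd (Fin.ext h) hl0
        · exact h
      rw [if_neg (by omega), mul_zero, mul_zero]
    · simp
  · -- j₀ ≤ j+k : alternating sum of a degree-(k-1) binomial
    rw [if_neg (by omega)]
    have hterm2 : ∀ l : Fin (k+1),
        (if j₀ ≤ ((j:ℕ)+k-(l:ℕ))+1
          then ((((j:ℕ)+k-(l:ℕ)) + k - j₀).choose (k-1) : ℝ) else 0)
        = (((((j:ℕ)+2*k-j₀) - (l:ℕ)).choose (k-1) : ℝ)) := by
      intro l
      have hl : (l:ℕ) ≤ k := by have := l.isLt; omega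
      by_cases h : j₀ ≤ ((j:ℕ)+k-(l:ℕ))+1
      · rw [if_pos h]
        congr 2
        omega
      · rw [if_neg h]
        rw [Nat.choose_eq_zero_of_lt (by omega), Nat.cast_zero]
    simp only [hterm2]
    have := alt_sum_choose_eq_zero k (k-1) ((j:ℕ)+2*k-j₀) (by omega) (by omega)
    rw [Fin.sum_univ_eq_sum_range
      (fun l => (-1:ℝ)^l * (k.choose l) * ((1/(n:ℝ)^(k-1)) * ((((j:ℕ)+2*k-j₀) - l).choose (k-1) : ℝ)))]
    rw [← this, Finset.mul_sum]
    apply Finset.sum_congr rfl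
    intros; ring

lemma D1L_phiHigh_low (n k l₀ : ℕ) (h1 : 1 ≤ l₀) (hl : l₀ ≤ k) (j : Fin (n-k)) :
    D1L n k j (WithLp.toLp 2 (phiHigh n l₀ l₀)) = 0 := by
  have hjk : (j:ℕ) + k < n := by have := j.isLt; omega
  show (∑ l : Fin (k+1), (-1:ℝ)^(l:ℕ) * (k.choose (l:ℕ)) *
      phiHigh n l₀ l₀ ⟨(j:ℕ)+k-(l:ℕ), by omega⟩) = 0
  have hterm : ∀ l : Fin (k+1),
      phiHigh n l₀ l₀ ⟨(j:ℕ)+k-(l:ℕ), by omega⟩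
      = (1/(n:ℝ)^(l₀-1)) * (((((j:ℕ)+k) - (l:ℕ)).choose (l₀-1) : ℝ)) := by
    intro l
    have hlk : (l:ℕ) ≤ k := by have := l.isLt; omega
    have h0 : phiHigh n l₀ l₀ ⟨(j:ℕ)+k-(l:ℕ), by omega⟩
        = (1/(n:ℝ)^(l₀-1)) * (if l₀ ≤ ((j:ℕ)+k-(l:ℕ))+1
            then ((((j:ℕ)+k-(l:ℕ)) + l₀ - l₀).choose (l₀-1) : ℝ) else 0) :=
      phiHigh_closed n l₀ h1 l₀ ⟨(j:ℕ)+k-(l:ℕ), by omega⟩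
    rw [h0]
    congr 1
    by_cases h : l₀ ≤ ((j:ℕ)+k-(l:ℕ))+1
    · rw [if_pos h]
      congr 2
      omega
    · rw [if_neg h]
      rw [Nat.choose_eq_zero_of_lt (by omega), Nat.cast_zero]
  simp only [hterm]
  have := alt_sum_choose_eq_zero k (l₀-1) ((j:ℕ)+k) (by omega) (by omega)
  rw [Fin.sum_univ_eq_sum_range
    (fun l => (-1:ℝ)^l * (k.choose l) * ((1/(n:ℝ)^(l₀-1)) * ((((j:ℕ)+k) - l).choose (l₀-1) : ℝ)))]
  rw [← mul_zero ((1:ℝ)/(n:ℝ)^(l₀-1)), ← this, Finset.mul_sum]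
  apply Finset.sum_congr rfl
  intros; ring

lemma Vspan_ker (n k m : ℕ) (hm : m ≤ k) (j : Fin (n-k)) :
    Vspan n m ≤ LinearMap.ker (D1L n k j) := by
  rw [Vspan, Submodule.span_le]
  rintro v ⟨l, hl, rfl⟩
  rw [Finset.mem_Icc] at hl
  simp only [SetLike.mem_coe, LinearMap.mem_ker]
  have hphi : phi n l l = WithLp.toLp 2 (phiHigh n l l) := by
    rw [phi, if_neg (by omega)]
  rw [hphi]
  exact D1L_phiHigh_low n k l hl.1 (le_trans hl.2 hm) j

lemma D1L_AW (n k m : ℕ) (hm : m ≤ k) (j : Fin (n-k)) (v : EuclideanSpace ℝ (Fin n)) :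
    D1L n k j (AW (Vspan n m) v) = D1L n k j v := by
  show D1L n k j ((Vspan n m)ᗮ.starProjection v) = _
  rw [Submodule.starProjection_orthogonal_val, map_sub]
  have h0 : D1L n k j ((Vspan n m).starProjection v) = 0 :=
    LinearMap.mem_ker.mp (Vspan_ker n k m hm j (Submodule.starProjection_apply_mem _ v))
  rw [h0, sub_zero]

lemma D1L_phiTil_high (n k : ℕ) (hk : 1 ≤ k) (j₀ : ℕ) (hj : k+1 ≤ j₀) (j : Fin (n-k)) :
    D1L n k j (phiTil n k j₀) = (1/(n:ℝ)^(k-1)) * (if (j:ℕ)+k+1 = j₀ then 1 else 0) := by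
  rw [phiTil, if_neg (by omega), D1L_AW n k k le_rfl]
  have hphi : phi n k j₀ = WithLp.toLp 2 (phiHigh n k j₀) := by
    rw [phi, if_neg (by omega)]
  rw [hphi, D1L_phiHigh_main n k hk]

lemma D1L_phiTil_low (n k j₀ : ℕ) (hk : 1 ≤ k) (h1 : 1 ≤ j₀) (hj : j₀ ≤ k) (j : Fin (n-k)) :
    D1L n k j (phiTil n k j₀) = 0 := by
  rw [phiTil, if_pos hj, map_smul, smul_eq_mul, D1L_AW n k (j₀-1) (by omega) j]
  have hphi : phi n j₀ j₀ = WithLp.toLp 2 (phiHigh n j₀ j₀) := by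
    rw [phi, if_neg (by omega)]
  rw [hphi, D1L_phiHigh_low n k j₀ h1 hj j, mul_zero]

lemma Dop_factor (nn : ι → ℕ) (k : ℕ) (g : ∀ i, EuclideanSpace ℝ (Fin (nn i)))
    (j' : DIdx nn k) :
    Dop nn k (WithLp.toLp 2 (fun x : Idx nn => ∏ i, g i (x i))) j'
      = ∏ i, ((nn i : ℝ)^(k-1) * D1L (nn i) k (j' i) (g i)) := by
  rw [Finset.prod_mul_distrib, Dop]
  congr 1
  have hD : ∀ i, D1L (nn i) k (j' i) (g i)
      = ∑ l : Fin (k+1), (-1:ℝ)^(l:ℕ) * (k.choose (l:ℕ)) *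
          g i ⟨(j' i:ℕ)+k-(l:ℕ), by have := (j' i).isLt; omega⟩ := fun i => rfl
  rw [Finset.prod_congr rfl (fun i _ => hD i),
    Finset.prod_univ_sum (fun _ => (Finset.univ : Finset (Fin (k+1))))]
  rw [Fintype.piFinset_univ]
  apply Finset.sum_congr rfl
  intro l _
  rw [← Finset.prod_mul_distrib]

lemma Dop_phiTilD_high (nn : ι → ℕ) (k : ℕ) (hk : 1 ≤ k) (hk' : ∀ i, k ≤ nn i - 1)
    (j : ι → ℕ) (hj : ∀ i, k + 1 ≤ j i ∧ j i ≤ nn i) :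
    Dop nn k (phiTilD nn k j)
      = fun j' : DIdx nn k => if ∀ i, (j' i : ℕ) + k + 1 = j i then 1 else 0 := by
  funext j'
  have hfac := Dop_factor nn k (fun i => phiTil (nn i) k (j i)) j'
  rw [show phiTilD nn k j = WithLp.toLp 2 (fun x : Idx nn => ∏ i, phiTil (nn i) k (j i) (x i)) from rfl, hfac]
  have hfact : ∀ i, (nn i : ℝ)^(k-1) * D1L (nn i) k (j' i) (phiTil (nn i) k (j i))
      = (if (j' i:ℕ)+k+1 = j i then 1 else 0) := by
    intro i
    have hn : (2:ℕ) ≤ nn i := by have := hk' i; omega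
    rw [D1L_phiTil_high (nn i) k hk (j i) (hj i).1]
    have hne : ((nn i : ℝ))^(k-1) ≠ 0 := by
      apply pow_ne_zero
      exact_mod_cast (by omega : nn i ≠ 0)
    field_simp
  rw [Finset.prod_congr rfl (fun i _ => hfact i), Finset.prod_boole]
  simp

lemma Dop_phiTilD_low (nn : ι → ℕ) (k : ℕ) (hk : 1 ≤ k)
    (j : ι → ℕ) (hj : ∀ i, 1 ≤ j i ∧ j i ≤ nn i) (hlow : ∃ i, j i ≤ k) :
    Dop nn k (phiTilD nn k j) = 0 := by
  funext j'
  obtain ⟨i₀, hi₀⟩ := hlow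
  have hfac := Dop_factor nn k (fun i => phiTil (nn i) k (j i)) j'
  rw [show phiTilD nn k j = WithLp.toLp 2 (fun x : Idx nn => ∏ i, phiTil (nn i) k (j i) (x i)) from rfl, hfac]
  show _ = (0:ℝ)
  apply Finset.prod_eq_zero (Finset.mem_univ i₀)
  rw [D1L_phiTil_low (nn i₀) k (j i₀) hk (hj i₀).1 hi₀, mul_zero]

/-- **Synthesis identity in `d` dimensions.**  Fix `k ∈ {1, …, min_i n_i − 1}`.  For every
1-based multi-index `(j₁,…,j_d)` with `j_i ∈ {k+1,…,n_i}` for all `i`, one has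
`D^k φ̃^k_{j₁,…,j_d} = 1_{{(j₁,…,j_d)}}`; and `D^k φ̃^k_{j₁,…,j_d} = 0` whenever `j_i ≤ k`
for some `i`.  Consequently, if `f = ∑_{j} β_j φ̃^k_j` (the sum over
`j ∈ ∏ i, {k+1,…,n_i}`) for coefficients `β ∈ ℝ^{(n₁−k)×⋯×(n_d−k)}`, then `D^k f = β`. -/
theorem synthesis_identity (nn : ι → ℕ) (k : ℕ)
    (hk : 1 ≤ k) (hk' : ∀ i, k ≤ nn i - 1) :
    (∀ j : ι → ℕ, (∀ i, k + 1 ≤ j i ∧ j i ≤ nn i) →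
      Dop nn k (phiTilD nn k j)
        = fun j' : DIdx nn k => if ∀ i, (j' i : ℕ) + k + 1 = j i then 1 else 0) ∧
    (∀ j : ι → ℕ, (∀ i, 1 ≤ j i ∧ j i ≤ nn i) → (∃ i, j i ≤ k) →
      Dop nn k (phiTilD nn k j) = 0) ∧
    (∀ β : DIdx nn k → ℝ,
      Dop nn k (∑ j : DIdx nn k, β j • phiTilD nn k (fun i => (j i : ℕ) + k + 1)) = β) := by
  refine ⟨fun j hj => Dop_phiTilD_high nn k hk hk' j hj,
    fun j hj hlow => Dop_phiTilD_low nn k hk j hj hlow, fun β => ?_⟩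
  funext j'
  have hlin : Dop nn k (∑ j : DIdx nn k, β j • phiTilD nn k (fun i => (j i : ℕ) + k + 1)) j'
      = ∑ j : DIdx nn k, β j * Dop nn k (phiTilD nn k (fun i => (j i : ℕ) + k + 1)) j' := by
    have happ : ∀ (x : Idx nn),
        (∑ j : DIdx nn k, β j • phiTilD nn k (fun i => (j i:ℕ)+k+1)) x
          = ∑ j : DIdx nn k, β j * phiTilD nn k (fun i => (j i:ℕ)+k+1) x := by
      intro x
      rw [WithLp.ofLp_sum, Finset.sum_apply]
      apply Finset.sum_congr rfl
      intro j _
      rw [PiLp.smul_apply, smul_eq_mul]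
    simp only [Dop, happ, Finset.mul_sum]
    rw [Finset.sum_comm]
    apply Finset.sum_congr rfl
    intro j _
    apply Finset.sum_congr rfl
    intro l _
    ring
  rw [hlin]
  have hone : ∀ j : DIdx nn k,
      Dop nn k (phiTilD nn k (fun i => (j i : ℕ) + k + 1)) j' = if j' = j then 1 else 0 := by
    intro j
    have hj : ∀ i, k + 1 ≤ (j i : ℕ) + k + 1 ∧ (j i : ℕ) + k + 1 ≤ nn i := by
      intro i
      have := (j i).isLt
      have := hk' i
      omega
    simp only [Dop_phiTilD_high nn k hk hk' _ hj]
    by_cases h : j' = j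
    · rw [if_pos h, if_pos]
      intro i
      rw [h]
    · rw [if_neg h, if_neg]
      intro hall
      apply h
      funext i
      exact Fin.ext (by have := hall i; omega)
  rw [Finset.sum_congr rfl (fun j _ => by rw [hone j])]
  simp only [mul_ite, mul_one, mul_zero]
  rw [Finset.sum_ite_eq (Finset.univ : Finset (DIdx nn k)) j' β]
  simp

end VitaliTV
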